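/- For any integer k ≥ 2, in the 2-player zero-sum game H2(k) on action sets {0,1,…,k−1} with Player 2's payoff u2(a2,a3) = 1 if a2 = a3, −1 if a2 ≡ a3 + 1 (mod k), and 0 otherwise (and u3 = −u2), the strategy profile in which each player plays each action with probability 1/k is the unique Nash equilibrium, and it yields payoff 0 to both players. -/

import Mathlib

open Finset

/-- Player 2's payoff in the 2-player zero-sum game H2(k):
1 if a2 = a3, −1 if a2 ≡ a3 + 1 (mod k), 0 otherwise. Player 3's payoff is its negation. -/
def H2pay (k : ℕ) (a b : Fin k) : ℝ :=
  if a = b then 1 else if (a : ℕ) = ((b : ℕ) + 1) % k then -1 else 0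

/-- A mixed strategy: a probability distribution on the actions. -/
def IsDist {α : Type} [Fintype α] (x : α → ℝ) : Prop :=
  (∀ i, 0 ≤ x i) ∧ ∑ i, x i = 1

/-- Expected payoff of Player 2 in H2(k). -/
noncomputable def H2E (k : ℕ) (x y : Fin k → ℝ) : ℝ :=
  ∑ a, ∑ b, x a * y b * H2pay k a b

/-- `(x,y)` is a Nash equilibrium of the zero-sum game H2(k):
Player 2 maximizes `H2E`, Player 3 (payoff −H2E) minimizes it. -/
def H2NE (k : ℕ) (x y : Fin k → ℝ) : Prop :=
  IsDist x ∧ IsDist y ∧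
  (∀ x', IsDist x' → H2E k x' y ≤ H2E k x y) ∧
  (∀ y', IsDist y' → H2E k x y ≤ H2E k x y')

section Aux

variable {k : ℕ} [NeZero k]

lemma aux_one_ne_zero (hk : 2 ≤ k) : (1 : Fin k) ≠ 0 := by
  intro h
  have := congrArg Fin.val h
  rw [Fin.val_one', Nat.mod_eq_of_lt (by omega : 1 < k)] at this
  simp at this

lemma H2pay_eq (hk : 2 ≤ k) (a b : Fin k) :
    H2pay k a b = (if b = a then (1:ℝ) else 0) + (if b = a - 1 then (-1 : ℝ) else 0) := by
  have hmod : ((b : ℕ) + 1) % k = ((b + 1 : Fin k) : ℕ) := by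
    rw [Fin.val_add, Fin.val_one', Nat.add_mod_mod]
  have hiff : (a = b + 1) ↔ (b = a - 1) :=
    ⟨fun h => by rw [h, add_sub_cancel_right], fun h => by rw [h, sub_add_cancel]⟩
  unfold H2pay
  rw [hmod]
  simp only [Fin.val_eq_val]
  by_cases h1 : a = b
  · subst h1
    have hne : a ≠ a - 1 := by
      intro h
      exact aux_one_ne_zero hk (sub_eq_self.mp h.symm)
    simp [hne, Ne.symm hne]
  · rw [if_neg h1, if_neg (show ¬ b = a from fun h => h1 h.symm), zero_add]
    by_cases h2 : a = b + 1
    · rw [if_pos h2, if_pos (hiff.mp h2)]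
    · rw [if_neg h2, if_neg (fun h => h2 (hiff.mpr h))]

lemma inner_row (hk : 2 ≤ k) (y : Fin k → ℝ) (a : Fin k) :
    ∑ b, y b * H2pay k a b = y a - y (a - 1) := by
  simp only [H2pay_eq hk a, mul_add]
  rw [Finset.sum_add_distrib]
  have h1 : (∑ b, y b * if b = a then (1:ℝ) else 0) = y a := by simp
  have h2 : (∑ b, y b * if b = a - 1 then (-1:ℝ) else 0) = -y (a - 1) := by simp
  rw [h1, h2]
  ring

lemma inner_col (hk : 2 ≤ k) (x : Fin k → ℝ) (b : Fin k) :
    ∑ a, x a * H2pay k a b = x b - x (b + 1) := by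
  have hrw : ∀ a : Fin k, (b = a - 1) ↔ (a = b + 1) :=
    fun a => ⟨fun h => by rw [h, sub_add_cancel], fun h => by rw [h, add_sub_cancel_right]⟩
  simp only [H2pay_eq hk _ b]
  simp only [hrw, mul_add]
  rw [Finset.sum_add_distrib]
  have h1 : (∑ a, x a * if b = a then (1:ℝ) else 0) = x b := by simp
  have h2 : (∑ a, x a * if a = b + 1 then (-1:ℝ) else 0) = -x (b + 1) := by simp
  rw [h1, h2]
  ring

lemma H2E_row (hk : 2 ≤ k) (x y : Fin k → ℝ) :
    H2E k x y = ∑ a, x a * (y a - y (a - 1)) := by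
  unfold H2E
  refine Finset.sum_congr rfl fun a _ => ?_
  simp_rw [mul_assoc, ← Finset.mul_sum, inner_row hk]

lemma H2E_col (hk : 2 ≤ k) (x y : Fin k → ℝ) :
    H2E k x y = ∑ b, y b * (x b - x (b + 1)) := by
  unfold H2E
  rw [Finset.sum_comm]
  refine Finset.sum_congr rfl fun b _ => ?_
  simp_rw [show ∀ a, x a * y b * H2pay k a b = y b * (x a * H2pay k a b) from fun a => by ring,
    ← Finset.mul_sum, inner_col hk]

omit [NeZero k] in
lemma isDist_pure (c : Fin k) :
    IsDist (fun i : Fin k => if i = c then (1:ℝ) else 0) := by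
  constructor
  · intro i; dsimp only; split <;> norm_num
  · simp

omit [NeZero k] in
lemma isDist_unif (hk : 2 ≤ k) : IsDist (fun _ : Fin k => (1:ℝ)/k) := by
  have hk0 : (k:ℝ) ≠ 0 := by positivity
  constructor
  · intro i; positivity
  · rw [Finset.sum_const, Finset.card_univ, Fintype.card_fin, nsmul_eq_mul]
    field_simp

lemma H2E_pure_left (hk : 2 ≤ k) (y : Fin k → ℝ) (a : Fin k) :
    H2E k (fun i => if i = a then (1:ℝ) else 0) y = y a - y (a - 1) := by
  rw [H2E_row hk]
  simp [ite_mul]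

lemma H2E_pure_right (hk : 2 ≤ k) (x : Fin k → ℝ) (b : Fin k) :
    H2E k x (fun i => if i = b then (1:ℝ) else 0) = x b - x (b + 1) := by
  rw [H2E_col hk]
  simp [ite_mul]

lemma H2E_unif_right (hk : 2 ≤ k) (x : Fin k → ℝ) :
    H2E k x (fun _ => (1:ℝ)/k) = 0 := by
  rw [H2E_row hk]; simp

lemma H2E_unif_left (hk : 2 ≤ k) (y : Fin k → ℝ) :
    H2E k (fun _ => (1:ℝ)/k) y = 0 := by
  rw [H2E_col hk]; simp

open Fin.NatCast in
lemma shift_const (x : Fin k → ℝ) (h : ∀ b, x (b + 1) = x b) (i : Fin k) :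
    x i = x 0 := by
  have hn : ∀ n : ℕ, x (n : Fin k) = x 0 := by
    intro n
    induction n with
    | zero => norm_num
    | succ n ih => rw [Nat.cast_succ, h, ih]
  have := hn i.val
  rwa [Fin.cast_val_eq_self] at this

end Aux

/-- For k ≥ 2, the unique Nash equilibrium of H2(k) is for both players to play
uniformly, and it yields payoff 0 to both players. -/
theorem stmt5 (k : ℕ) (hk : 2 ≤ k) :
    (∀ x y : Fin k → ℝ,
      H2NE k x y ↔ (x = fun _ => (1 : ℝ) / k) ∧ (y = fun _ => (1 : ℝ) / k)) ∧
    H2E k (fun _ => (1 : ℝ) / k) (fun _ => (1 : ℝ) / k) = 0 := by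
  haveI : NeZero k := ⟨by omega⟩
  have hk0 : (0:ℝ) < k := by exact_mod_cast (by omega : 0 < k)
  constructor
  · intro x y
    constructor
    · rintro ⟨hx, hy, hmax, hmin⟩
      set v := H2E k x y with hv
      have hrow : ∀ a, y a - y (a - 1) ≤ v := by
        intro a
        have := hmax _ (isDist_pure a)
        rwa [H2E_pure_left hk] at this
      have hcol : ∀ b, v ≤ x b - x (b + 1) := by
        intro b
        have := hmin _ (isDist_pure b)
        rwa [H2E_pure_right hk] at this
      have hysum : ∑ a, (y a - y (a - 1)) = 0 := by
        rw [Finset.sum_sub_distrib,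
          show ∑ a, y (a - 1) = ∑ a, y a from
            Fintype.sum_equiv (Equiv.subRight (1 : Fin k)) _ _ (fun a => rfl)]
        ring
      have hxsum : ∑ b, (x b - x (b + 1)) = 0 := by
        rw [Finset.sum_sub_distrib,
          show ∑ b, x (b + 1) = ∑ b, x b from
            Fintype.sum_equiv (Equiv.addRight (1 : Fin k)) _ _ (fun b => rfl)]
        ring
      have hv0 : v = 0 := by
        have h1 : (0:ℝ) ≤ k * v := by
          calc (0:ℝ) = ∑ a, (y a - y (a - 1)) := hysum.symm
          _ ≤ ∑ _a : Fin k, v := Finset.sum_le_sum fun a _ => hrow a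
          _ = k * v := by simp [Finset.sum_const, Finset.card_univ, nsmul_eq_mul]
        have h2 : (k:ℝ) * v ≤ 0 := by
          calc (k:ℝ) * v = ∑ _b : Fin k, v := by
                simp [Finset.sum_const, Finset.card_univ, nsmul_eq_mul]
          _ ≤ ∑ b, (x b - x (b + 1)) := Finset.sum_le_sum fun b _ => hcol b
          _ = 0 := hxsum
        nlinarith
      have hxshift : ∀ b : Fin k, x (b + 1) = x b := by
        have hz := (Finset.sum_eq_zero_iff_of_nonneg
          (fun b _ => by have := hcol b; rw [hv0] at this; linarith)).mp hxsum
        intro b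
        have := hz b (Finset.mem_univ b)
        linarith
      have hyshift : ∀ b : Fin k, y (b + 1) = y b := by
        have hz := (Finset.sum_eq_zero_iff_of_nonpos
          (fun a _ => by have := hrow a; rw [hv0] at this; linarith)).mp hysum
        intro b
        have := hz (b + 1) (Finset.mem_univ _)
        rw [add_sub_cancel_right] at this
        linarith
      have hxval : x 0 = 1 / k := by
        have hs : ∑ i : Fin k, x i = ∑ _i : Fin k, x 0 :=
          Finset.sum_congr rfl fun i _ => shift_const x hxshift i
        rw [hx.2, Finset.sum_const, Finset.card_univ, Fintype.card_fin, nsmul_eq_mul] at hs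
        field_simp
        linarith
      have hyval : y 0 = 1 / k := by
        have hs : ∑ i : Fin k, y i = ∑ _i : Fin k, y 0 :=
          Finset.sum_congr rfl fun i _ => shift_const y hyshift i
        rw [hy.2, Finset.sum_const, Finset.card_univ, Fintype.card_fin, nsmul_eq_mul] at hs
        field_simp
        linarith
      constructor
      · funext i; rw [shift_const x hxshift i, hxval]
      · funext i; rw [shift_const y hyshift i, hyval]
    · rintro ⟨hx', hy'⟩
      subst hx'; subst hy'
      refine ⟨isDist_unif hk, isDist_unif hk, ?_, ?_⟩
      · intro x' _
        rw [H2E_unif_right hk, H2E_unif_right hk]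
      · intro y' _
        rw [H2E_unif_left hk, H2E_unif_left hk]
  · exact H2E_unif_right hk _
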